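/- For integers k ≥ 1, Q ≥ 1, R ≥ 1, and any ε > 0, there is a constant C = C(k, ε) such that #{1 ≤ n ≤ R : d_Q(n) > D} ≤ C · D^{-k} · R · Q^{εk} for all real D > 0, where d_Q(n) is the number of divisors q of n with Q ≤ q < 2Q. -/

import Mathlib

open Finset

lemma divisor_card_bound (δ : ℝ) (hδ : 0 < δ) :
    ∃ C : ℝ, 1 ≤ C ∧ ∀ n : ℕ, n ≠ 0 → (n.divisors.card : ℝ) ≤ C * (n : ℝ) ^ δ := by
  have hlog2 : 0 < Real.log 2 := Real.log_pos one_lt_two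
  set C0 : ℝ := max 1 (1 / (δ * Real.log 2)) with hC0def
  have hC0one : 1 ≤ C0 := le_max_left _ _
  have hC0pos : 0 < C0 := lt_of_lt_of_le one_pos hC0one
  have hC0' : 1 ≤ C0 * (δ * Real.log 2) := by
    rw [← div_le_iff₀ (by positivity)]
    exact le_max_right _ _
  set N : ℕ := ⌈(2:ℝ) ^ (1/δ)⌉₊ with hNdef
  refine ⟨C0 ^ N, one_le_pow₀ hC0one, ?_⟩
  intro n hn
  set c : ℕ → ℝ := fun p => if (p:ℝ) ^ δ < 2 then C0 else 1 with hc
  have key : ∀ p ∈ n.primeFactors,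
      ((n.factorization p + 1 : ℕ) : ℝ) ≤ c p * ((p : ℝ) ^ (n.factorization p : ℕ)) ^ δ := by
    intro p hp
    have hpp : p.Prime := Nat.prime_of_mem_primeFactors hp
    have hp2 : (2:ℝ) ≤ (p:ℝ) := by exact_mod_cast hpp.two_le
    have hppos : (0:ℝ) < p := by linarith
    set a : ℕ := n.factorization p with ha
    have hrw : ((p : ℝ) ^ (a : ℕ)) ^ δ = ((p:ℝ) ^ δ) ^ (a : ℕ) := by
      rw [← Real.rpow_natCast (p:ℝ) a, ← Real.rpow_mul hppos.le, mul_comm,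
        Real.rpow_mul hppos.le, Real.rpow_natCast]
    rw [hrw, hc]
    by_cases hsmall : (p:ℝ) ^ δ < 2
    · simp only [if_pos hsmall]
      have h2d : (2:ℝ) ^ δ ≤ (p:ℝ) ^ δ := Real.rpow_le_rpow (by norm_num) hp2 hδ.le
      have hexp : Real.log 2 * (δ * a) + 1 ≤ ((2:ℝ) ^ δ) ^ (a:ℕ) := by
        have : ((2:ℝ) ^ δ) ^ (a:ℕ) = Real.exp (Real.log 2 * (δ * a)) := by
          rw [← Real.rpow_natCast ((2:ℝ)^δ) a, ← Real.rpow_mul (by norm_num),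
            Real.rpow_def_of_pos (by norm_num)]
        rw [this]
        exact Real.add_one_le_exp _
      have hmono : ((2:ℝ) ^ δ) ^ (a:ℕ) ≤ ((p:ℝ) ^ δ) ^ (a:ℕ) :=
        pow_le_pow_left₀ (by positivity) h2d a
      have hanng : (0:ℝ) ≤ a := Nat.cast_nonneg a
      push_cast
      nlinarith [mul_le_mul_of_nonneg_right hC0' hanng]
    · simp only [if_neg hsmall, one_mul]
      push_neg at hsmall
      have h1 : ((a + 1 : ℕ) : ℝ) ≤ (2:ℝ) ^ (a : ℕ) := by
        exact_mod_cast Nat.succ_le_of_lt (Nat.lt_two_pow_self (n := a))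
      calc ((a + 1 : ℕ) : ℝ) ≤ (2:ℝ) ^ (a:ℕ) := h1
        _ ≤ ((p:ℝ) ^ δ) ^ (a:ℕ) := pow_le_pow_left₀ (by norm_num) hsmall a
  have hcard : (n.divisors.card : ℝ) = ∏ p ∈ n.primeFactors, ((n.factorization p + 1 : ℕ) : ℝ) := by
    rw [Nat.card_divisors hn]
    push_cast
    rfl
  have hprod : ∏ p ∈ n.primeFactors, ((p : ℝ) ^ (n.factorization p : ℕ)) ^ δ = (n:ℝ) ^ δ := by
    rw [Real.finset_prod_rpow _ _ (fun p _ => by positivity) δ]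
    congr 1
    have h2 : n.primeFactors.prod (fun p => p ^ n.factorization p) = n := by
      rw [← Nat.support_factorization]
      exact Nat.factorization_prod_pow_eq_self hn
    exact_mod_cast congrArg (Nat.cast : ℕ → ℝ) h2
  have step1 : (n.divisors.card : ℝ) ≤ (∏ p ∈ n.primeFactors, c p) * (n:ℝ) ^ δ := by
    rw [hcard, ← hprod, ← Finset.prod_mul_distrib]
    exact Finset.prod_le_prod (fun p _ => by positivity) key
  have step2 : (∏ p ∈ n.primeFactors, c p) ≤ C0 ^ N := by
    have : ∏ p ∈ n.primeFactors, c p = C0 ^ (n.primeFactors.filter (fun p : ℕ => (p:ℝ) ^ δ < 2)).card := by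
      rw [hc, Finset.prod_ite, Finset.prod_const, Finset.prod_const, one_pow, mul_one]
    rw [this]
    apply pow_le_pow_right₀ hC0one
    calc (n.primeFactors.filter (fun p : ℕ => (p:ℝ) ^ δ < 2)).card
        ≤ (Finset.range N).card := by
          apply Finset.card_le_card
          intro p hp
          simp only [Finset.mem_filter] at hp
          have hpp : (p : ℕ).Prime := Nat.prime_of_mem_primeFactors hp.1
          have hppos : (0:ℝ) < p := by exact_mod_cast hpp.pos
          rw [Finset.mem_range, hNdef]
          rw [Nat.lt_ceil]
          calc (p:ℝ) = ((p:ℝ) ^ δ) ^ (1/δ) := by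
                rw [← Real.rpow_mul hppos.le, mul_one_div, div_self hδ.ne', Real.rpow_one]
            _ < (2:ℝ) ^ (1/δ) := by
                apply Real.rpow_lt_rpow (by positivity) hp.2 (by positivity)
      _ = N := Finset.card_range N
  calc (n.divisors.card : ℝ) ≤ (∏ p ∈ n.primeFactors, c p) * (n:ℝ) ^ δ := step1
    _ ≤ C0 ^ N * (n:ℝ) ^ δ := by
        apply mul_le_mul_of_nonneg_right step2 (by positivity)

lemma harm_sum_le (N : ℕ) : ∑ d ∈ Finset.Icc 1 N, (d:ℝ)⁻¹ ≤ 1 + Real.log N := by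
  have h := harmonic_le_one_add_log N
  have h2 : ((harmonic N : ℚ) : ℝ) = ∑ d ∈ Finset.Icc 1 N, (d:ℝ)⁻¹ := by
    rw [harmonic_eq_sum_Icc]
    push_cast
    rfl
  linarith [h2 ▸ h]

/-- Distributional bound for the truncated divisor function
`d_Q(n) = #{q ∣ n : Q ≤ q < 2Q}`:
`#{1 ≤ n ≤ R : d_Q(n) > D} ≤ C(k,ε) · D^{-k} · R · Q^{εk}`. -/
theorem divisor_count_distribution (k : ℕ) (hk : 1 ≤ k) (ε : ℝ) (hε : 0 < ε) :
    ∃ C : ℝ, 0 < C ∧ ∀ Q R : ℕ, 1 ≤ Q → 1 ≤ R → ∀ D : ℝ, 0 < D →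
      (((Finset.Icc 1 R).filter
          (fun n => D < (((Finset.Ico Q (2 * Q)).filter (fun q => q ∣ n)).card : ℝ))).card : ℝ)
        ≤ C * D ^ (-(k : ℝ)) * R * (Q : ℝ) ^ (ε * k) := by
  obtain ⟨C0, hC0one, hdiv⟩ := divisor_card_bound (ε / (2*k)) (by positivity)
  refine ⟨C0 ^ k * (1 + 2/ε) * (2:ℝ) ^ (ε * k), ?_, ?_⟩
  · have h1 : (0:ℝ) < C0 := lt_of_lt_of_le one_pos hC0one
    positivity
  intro Q R hQ hR D hD
  have hkpos : 0 < k := hk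
  set T : Finset (Fin k → ℕ) := Fintype.piFinset (fun _ => Finset.Ico Q (2*Q)) with hT
  set L : (Fin k → ℕ) → ℕ := fun t => Finset.univ.lcm t with hL
  set N : ℕ := (2*Q)^k with hNdef
  have hNone : 1 ≤ N := Nat.one_le_pow _ _ (by omega)
  -- facts about L on T
  have hLmem : ∀ t ∈ T, L t ∈ Finset.Icc 1 N := by
    intro t ht
    have hti : ∀ i, t i ∈ Finset.Ico Q (2*Q) := fun i => Fintype.mem_piFinset.mp ht i
    have hdvd : L t ∣ ∏ i, t i :=
      Finset.lcm_dvd (fun i _ => Finset.dvd_prod_of_mem t (Finset.mem_univ i))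
    have hPpos : 0 < ∏ i, t i := Finset.prod_pos (fun i _ => by
      have := (Finset.mem_Ico.mp (hti i)).1; omega)
    have hPle : ∏ i, t i ≤ N := by
      calc ∏ i, t i ≤ ∏ _i : Fin k, (2*Q) :=
            Finset.prod_le_prod' (fun i _ => le_of_lt (Finset.mem_Ico.mp (hti i)).2)
        _ = N := by rw [Finset.prod_const, Finset.card_univ, Fintype.card_fin]
    have hLpos : 0 < L t := Nat.pos_of_dvd_of_pos hdvd hPpos
    exact Finset.mem_Icc.mpr ⟨hLpos, le_trans (Nat.le_of_dvd hPpos hdvd) hPle⟩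
  -- Step B : expansion
  have expand : ∑ n ∈ Finset.Icc 1 R, (((Finset.Ico Q (2*Q)).filter (fun q => q ∣ n)).card)^k
      = ∑ t ∈ T, ((Finset.Icc 1 R).filter (fun n => L t ∣ n)).card := by
    have h1 : ∀ n : ℕ, (((Finset.Ico Q (2*Q)).filter (fun q => q ∣ n)).card)^k
        = (T.filter (fun t => ∀ i, t i ∣ n)).card := by
      intro n
      rw [← Fintype.card_piFinset_const]
      congr 1
      ext t
      simp [Fintype.mem_piFinset, Finset.mem_filter, forall_and, hT]
    simp_rw [h1, Finset.card_filter]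
    rw [Finset.sum_comm]
    refine Finset.sum_congr rfl (fun t ht => Finset.sum_congr rfl (fun n hn => ?_))
    congr 1
    simp only [hL, eq_iff_iff]
    rw [Finset.lcm_dvd_iff]
    simp
  -- Step C : counting multiples
  have count : ∀ t ∈ T, (((Finset.Icc 1 R).filter (fun n => L t ∣ n)).card : ℝ) ≤ (R:ℝ) / (L t) := by
    intro t ht
    have h : ((Finset.Icc 1 R).filter (fun n => L t ∣ n)).card = R / L t := by
      rw [show Finset.Icc 1 R = Finset.Ioc 0 R from Finset.Icc_add_one_left_eq_Ioc 0 R]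
      exact Nat.Ioc_filter_dvd_card_eq_div R (L t)
    rw [h]
    exact Nat.cast_div_le
  -- fibers
  have fiber : ∀ ℓ ∈ T.image L, ((T.filter (fun t => L t = ℓ)).card : ℝ) ≤ ((ℓ.divisors.card : ℝ))^k := by
    intro ℓ hℓ
    obtain ⟨t0, ht0, hLt0⟩ := Finset.mem_image.mp hℓ
    have hℓpos : ℓ ≠ 0 := by
      have := hLmem t0 ht0
      rw [hLt0] at this
      have := (Finset.mem_Icc.mp this).1; omega
    have hsub : T.filter (fun t => L t = ℓ) ⊆ Fintype.piFinset (fun _ : Fin k => ℓ.divisors) := by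
      intro t ht
      obtain ⟨htT, hteq⟩ := Finset.mem_filter.mp ht
      rw [Fintype.mem_piFinset]
      intro i
      rw [Nat.mem_divisors]
      exact ⟨hteq ▸ Finset.dvd_lcm (Finset.mem_univ i), hℓpos⟩
    calc ((T.filter (fun t => L t = ℓ)).card : ℝ)
        ≤ ((Fintype.piFinset (fun _ : Fin k => ℓ.divisors)).card : ℝ) := by
          exact_mod_cast Finset.card_le_card hsub
      _ = ((ℓ.divisors.card : ℝ))^k := by rw [Fintype.card_piFinset_const]; push_cast; ring
  -- d(ℓ)^k ≤ C0^k N^(ε/2) for ℓ ∈ Icc 1 N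
  have dbound : ∀ ℓ ∈ Finset.Icc 1 N, ((ℓ.divisors.card : ℝ))^k ≤ C0^k * (N:ℝ)^(ε/2) := by
    intro ℓ hℓ
    obtain ⟨h1, h2⟩ := Finset.mem_Icc.mp hℓ
    have hd := hdiv ℓ (by omega)
    have hnn : (0:ℝ) ≤ (ℓ:ℝ) ^ (ε / (2*k)) := Real.rpow_nonneg (Nat.cast_nonneg _) _
    calc ((ℓ.divisors.card : ℝ))^k ≤ (C0 * (ℓ:ℝ) ^ (ε / (2*k)))^k :=
          pow_le_pow_left₀ (Nat.cast_nonneg _) hd k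
      _ = C0^k * ((ℓ:ℝ) ^ (ε / (2*k)))^k := mul_pow _ _ _
      _ ≤ C0^k * (N:ℝ)^(ε/2) := by
          apply mul_le_mul_of_nonneg_left _ (by positivity)
          rw [← Real.rpow_natCast ((ℓ:ℝ) ^ (ε / (2*k))) k, ← Real.rpow_mul (Nat.cast_nonneg _)]
          have : ε / (2*k) * k = ε/2 := by field_simp
          rw [this]
          exact Real.rpow_le_rpow (Nat.cast_nonneg _) (by exact_mod_cast h2) (by positivity)
  -- harmonic
  have harm : ∑ ℓ ∈ Finset.Icc 1 N, (R:ℝ)/ℓ ≤ (R:ℝ) * ((1 + 2/ε) * (N:ℝ)^(ε/2)) := by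
    have h1 : ∑ ℓ ∈ Finset.Icc 1 N, (R:ℝ)/ℓ = (R:ℝ) * ∑ ℓ ∈ Finset.Icc 1 N, (ℓ:ℝ)⁻¹ := by
      rw [Finset.mul_sum]; refine Finset.sum_congr rfl (fun ℓ _ => ?_); rw [div_eq_mul_inv]
    rw [h1]
    apply mul_le_mul_of_nonneg_left _ (Nat.cast_nonneg _)
    have h2 := harm_sum_le N
    have h3 : Real.log N ≤ (2/ε) * (N:ℝ)^(ε/2) := by
      have := Real.log_le_rpow_div (Nat.cast_nonneg N) (show (0:ℝ) < ε/2 by positivity)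
      calc Real.log N ≤ (N:ℝ)^(ε/2) / (ε/2) := this
        _ = (2/ε) * (N:ℝ)^(ε/2) := by field_simp
    have h4 : (1:ℝ) ≤ (N:ℝ)^(ε/2) := Real.one_le_rpow (by exact_mod_cast hNone) (by positivity)
    calc ∑ ℓ ∈ Finset.Icc 1 N, (ℓ:ℝ)⁻¹ ≤ 1 + Real.log N := h2
      _ ≤ (N:ℝ)^(ε/2) + (2/ε) * (N:ℝ)^(ε/2) := by linarith
      _ = (1 + 2/ε) * (N:ℝ)^(ε/2) := by ring
  -- assemble the moment bound
  have moment : (∑ n ∈ Finset.Icc 1 R,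
      ((((Finset.Ico Q (2*Q)).filter (fun q => q ∣ n)).card : ℝ))^k)
      ≤ C0^k * (1 + 2/ε) * (R:ℝ) * (N:ℝ)^ε := by
    have cast1 : (∑ n ∈ Finset.Icc 1 R,
        ((((Finset.Ico Q (2*Q)).filter (fun q => q ∣ n)).card : ℝ))^k)
        = ((∑ t ∈ T, ((Finset.Icc 1 R).filter (fun n => L t ∣ n)).card : ℕ) : ℝ) := by
      rw [← expand]; push_cast; rfl
    rw [cast1]
    push_cast
    calc (∑ t ∈ T, (((Finset.Icc 1 R).filter (fun n => L t ∣ n)).card : ℝ))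
        ≤ ∑ t ∈ T, (R:ℝ) / (L t) := Finset.sum_le_sum count
      _ = ∑ ℓ ∈ T.image L, ((T.filter (fun t => L t = ℓ)).card : ℝ) * ((R:ℝ)/ℓ) := by
          rw [Finset.sum_comp (fun ℓ : ℕ => (R:ℝ)/ℓ) L]
          refine Finset.sum_congr rfl (fun ℓ _ => ?_)
          rw [nsmul_eq_mul]
      _ ≤ ∑ ℓ ∈ T.image L, ((ℓ.divisors.card : ℝ))^k * ((R:ℝ)/ℓ) := by
          refine Finset.sum_le_sum (fun ℓ hℓ => ?_)
          exact mul_le_mul_of_nonneg_right (fiber ℓ hℓ) (by positivity)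
      _ ≤ ∑ ℓ ∈ Finset.Icc 1 N, ((ℓ.divisors.card : ℝ))^k * ((R:ℝ)/ℓ) := by
          apply Finset.sum_le_sum_of_subset_of_nonneg
          · intro ℓ hℓ
            obtain ⟨t0, ht0, hLt0⟩ := Finset.mem_image.mp hℓ
            exact hLt0 ▸ hLmem t0 ht0
          · intro ℓ _ _; positivity
      _ ≤ ∑ ℓ ∈ Finset.Icc 1 N, (C0^k * (N:ℝ)^(ε/2)) * ((R:ℝ)/ℓ) := by
          refine Finset.sum_le_sum (fun ℓ hℓ => ?_)
          exact mul_le_mul_of_nonneg_right (dbound ℓ hℓ) (by positivity)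
      _ = (C0^k * (N:ℝ)^(ε/2)) * ∑ ℓ ∈ Finset.Icc 1 N, (R:ℝ)/ℓ := by
          rw [Finset.mul_sum]
      _ ≤ (C0^k * (N:ℝ)^(ε/2)) * ((R:ℝ) * ((1 + 2/ε) * (N:ℝ)^(ε/2))) := by
          apply mul_le_mul_of_nonneg_left harm (by positivity)
      _ = C0^k * (1 + 2/ε) * (R:ℝ) * ((N:ℝ)^(ε/2) * (N:ℝ)^(ε/2)) := by ring
      _ = C0^k * (1 + 2/ε) * (R:ℝ) * (N:ℝ)^ε := by
          rw [← Real.rpow_add (by positivity : (0:ℝ) < (N:ℝ))]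
          norm_num
  -- N^ε = 2^(εk) Q^(εk)
  have hNe : (N:ℝ)^ε = (2:ℝ)^(ε*k) * (Q:ℝ)^(ε*k) := by
    have h1 : (N:ℝ) = ((2*Q:ℕ):ℝ)^k := by rw [hNdef]; push_cast; ring
    rw [h1, ← Real.rpow_natCast (((2*Q:ℕ):ℝ)) k, ← Real.rpow_mul (by positivity),
      show ((k:ℝ) * ε) = ε * k by ring]
    push_cast
    rw [Real.mul_rpow (by norm_num) (Nat.cast_nonneg _)]
  -- Markov
  have hDk : (0:ℝ) < D^k := by positivity
  rw [show D ^ (-(k:ℝ)) = (D^k)⁻¹ by rw [Real.rpow_neg hD.le, Real.rpow_natCast]]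
  have markov : (((Finset.Icc 1 R).filter
      (fun n => D < (((Finset.Ico Q (2 * Q)).filter (fun q => q ∣ n)).card : ℝ))).card : ℝ) * D^k
      ≤ ∑ n ∈ Finset.Icc 1 R,
        ((((Finset.Ico Q (2*Q)).filter (fun q => q ∣ n)).card : ℝ))^k := by
    calc (((Finset.Icc 1 R).filter
        (fun n => D < (((Finset.Ico Q (2 * Q)).filter (fun q => q ∣ n)).card : ℝ))).card : ℝ) * D^k
        = ∑ _n ∈ (Finset.Icc 1 R).filter
            (fun n => D < (((Finset.Ico Q (2 * Q)).filter (fun q => q ∣ n)).card : ℝ)), D^k := by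
          rw [Finset.sum_const, nsmul_eq_mul]
      _ ≤ ∑ n ∈ (Finset.Icc 1 R).filter
            (fun n => D < (((Finset.Ico Q (2 * Q)).filter (fun q => q ∣ n)).card : ℝ)),
            ((((Finset.Ico Q (2*Q)).filter (fun q => q ∣ n)).card : ℝ))^k := by
          refine Finset.sum_le_sum (fun n hn => ?_)
          have := (Finset.mem_filter.mp hn).2
          exact pow_le_pow_left₀ hD.le this.le k
      _ ≤ ∑ n ∈ Finset.Icc 1 R,
            ((((Finset.Ico Q (2*Q)).filter (fun q => q ∣ n)).card : ℝ))^k := by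
          apply Finset.sum_le_sum_of_subset_of_nonneg (Finset.filter_subset _ _)
          intro n _ _; positivity
  calc (((Finset.Icc 1 R).filter
      (fun n => D < (((Finset.Ico Q (2 * Q)).filter (fun q => q ∣ n)).card : ℝ))).card : ℝ)
      ≤ (∑ n ∈ Finset.Icc 1 R,
          ((((Finset.Ico Q (2*Q)).filter (fun q => q ∣ n)).card : ℝ))^k) * (D^k)⁻¹ := by
        rw [← le_div_iff₀ hDk] at markov
        rw [div_eq_mul_inv] at markov
        exact markov
    _ ≤ (C0^k * (1 + 2/ε) * (R:ℝ) * (N:ℝ)^ε) * (D^k)⁻¹ := by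
        apply mul_le_mul_of_nonneg_right moment (by positivity)
    _ = (C0 ^ k * (1 + 2/ε) * (2:ℝ) ^ (ε * k)) * (D^k)⁻¹ * R * (Q : ℝ) ^ (ε * k) := by
        rw [hNe]; ring
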